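/- Let σ ∈ S^2 ⊂ ℝ^3 and extend it to a positively oriented orthonormal basis (σ, σ', σ'') of ℝ^3. Consider ℂ^2 = Z ⊕ W with the hyper-Kähler forms ω_1 = (i/2)(dz∧dz̄ + dw∧dw̄) and ω_2 + iω_3 = dz∧dw, and circle action g·(z,w) = (gz, g^{-1}w). If V ⊂ ℂ^2 is a 2-dimensional real subspace invariant under the circle action on which both ω^{σ'} = σ'_1ω_1 + σ'_2ω_2 + σ'_3ω_3 and ω^{σ''} vanish, and V is isomorphic to Z as a real circle-representation, then V = V(σ) or V = V(-σ), where V(y) = {(αz, β z̄) : z ∈ ℂ} for any (α,β) ∈ S^3 with h(α,β) = y and h(α,β) = (|α|^2-|β|^2, 2Im(αβ), -2Re(αβ)). -/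

import Mathlib

open scoped BigOperators

/-- The Kähler form `ω₁ = (i/2)(dz∧dz̄ + dw∧dw̄)` on `ℂ² = Z ⊕ W`, evaluated on vectors. -/
noncomputable def om1 (P Q : ℂ × ℂ) : ℝ :=
  ((starRingEnd ℂ) P.1 * Q.1).im + ((starRingEnd ℂ) P.2 * Q.2).im

/-- The holomorphic symplectic form `ω₂ + iω₃ = dz∧dw`, evaluated on vectors. -/
def omC (P Q : ℂ × ℂ) : ℂ := P.1 * Q.2 - Q.1 * P.2

/-- `ω^y = y₀ ω₁ + y₁ ω₂ + y₂ ω₃` for `y ∈ ℝ³`. -/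
noncomputable def omSigma (y : Fin 3 → ℝ) (P Q : ℂ × ℂ) : ℝ :=
  y 0 * om1 P Q + y 1 * (omC P Q).re + y 2 * (omC P Q).im

/-- `V(y) = {(αz, β z̄) : z ∈ ℂ}` for `(α,β) ∈ S³` in the Hopf fiber over `y ∈ S²`. -/
def Vset (y : Fin 3 → ℝ) : Set (ℂ × ℂ) :=
  {P | ∃ α β z : ℂ, Complex.normSq α + Complex.normSq β = 1 ∧
    Complex.normSq α - Complex.normSq β = y 0 ∧ 2 * (α * β).im = y 1 ∧
    -2 * (α * β).re = y 2 ∧ P = (α * z, β * (starRingEnd ℂ) z)}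

private lemma aux_col (σ σ' σ'' : Fin 3 → ℝ)
    (h1 : σ 0 * σ 0 + σ 1 * σ 1 + σ 2 * σ 2 = 1)
    (h2 : σ' 0 * σ' 0 + σ' 1 * σ' 1 + σ' 2 * σ' 2 = 1)
    (h3 : σ'' 0 * σ'' 0 + σ'' 1 * σ'' 1 + σ'' 2 * σ'' 2 = 1)
    (ho1 : σ 0 * σ' 0 + σ 1 * σ' 1 + σ 2 * σ' 2 = 0)
    (ho2 : σ 0 * σ'' 0 + σ 1 * σ'' 1 + σ 2 * σ'' 2 = 0)
    (ho3 : σ' 0 * σ'' 0 + σ' 1 * σ'' 1 + σ' 2 * σ'' 2 = 0) :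
    ∀ i j : Fin 3, σ i * σ j + σ' i * σ' j + σ'' i * σ'' j = if i = j then 1 else 0 := by
  have hent : ∀ i j : Fin 3, (Matrix.of ![σ, σ', σ'']) i j = ![σ, σ', σ''] i j :=
    fun i j => rfl
  have hMMT : (Matrix.of ![σ, σ', σ'']) * (Matrix.of ![σ, σ', σ'']).transpose = 1 := by
    ext i j
    rw [Matrix.mul_apply, Fin.sum_univ_three]
    simp only [Matrix.transpose_apply, hent]
    fin_cases i <;> fin_cases j <;>
      norm_num [Matrix.cons_val_zero, Matrix.cons_val_one, Matrix.head_cons,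
        Matrix.cons_val_two, Matrix.tail_cons, Matrix.one_apply, Fin.ext_iff] <;> linarith
  have hMTM := mul_eq_one_comm.mp hMMT
  intro i j
  have h := congrFun (congrFun hMTM i) j
  rw [Matrix.mul_apply, Fin.sum_univ_three] at h
  simp only [Matrix.transpose_apply, hent] at h
  simp only [Matrix.cons_val_zero, Matrix.cons_val_one, Matrix.head_cons, Matrix.cons_val_two,
    Matrix.tail_cons] at h
  rw [h, Matrix.one_apply]

set_option maxHeartbeats 2000000 in
theorem stmt12 (σ σ' σ'' : Fin 3 → ℝ)
    (hunit : ∀ v ∈ ({σ, σ', σ''} : Set (Fin 3 → ℝ)), ∑ i, v i * v i = 1)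
    (horth : ∑ i, σ i * σ' i = 0 ∧ ∑ i, σ i * σ'' i = 0 ∧ ∑ i, σ' i * σ'' i = 0)
    (hor : Matrix.det (Matrix.of ![σ, σ', σ'']) = 1)
    (V : Submodule ℝ (ℂ × ℂ))
    (hdim : Module.finrank ℝ V = 2)
    (hinv : ∀ (t : ℝ), ∀ x ∈ V,
      (Complex.exp (Complex.I * t) * x.1, Complex.exp (-(Complex.I * t)) * x.2) ∈ V)
    (hσ' : ∀ x ∈ V, ∀ y ∈ V, omSigma σ' x y = 0)
    (hσ'' : ∀ x ∈ V, ∀ y ∈ V, omSigma σ'' x y = 0)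
    (hrep : ∃ f : ℂ →ₗ[ℝ] ℂ × ℂ, Function.Injective f ∧ LinearMap.range f = V ∧
      ∀ (t : ℝ) (z : ℂ), f (Complex.exp (Complex.I * t) * z) =
        (Complex.exp (Complex.I * t) * (f z).1, Complex.exp (-(Complex.I * t)) * (f z).2)) :
    (V : Set (ℂ × ℂ)) = Vset σ ∨ (V : Set (ℂ × ℂ)) = Vset (fun i => -σ i) := by
  classical
  obtain ⟨f, hfinj, hfrange, hfe⟩ := hrep
  set a : ℂ := (f 1).1 with ha
  set b : ℂ := (f 1).2 with hb
  -- the explicit form of f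
  have hf : ∀ z : ℂ, f z = (a * z, b * (starRingEnd ℂ) z) := by
    have hI1 : Complex.exp (Complex.I * (Real.pi/2)) = Complex.I := by
      rw [mul_comm, Complex.exp_mul_I]
      norm_num [← Complex.ofReal_cos, ← Complex.ofReal_sin]
    have hI2 : Complex.exp (-(Complex.I * (Real.pi/2))) = -Complex.I := by
      rw [← neg_mul, neg_mul_comm, mul_comm, Complex.exp_mul_I]
      norm_num
    have hfI : f Complex.I = (Complex.I * a, -Complex.I * b) := by
      have h := hfe (Real.pi/2) 1
      push_cast at h
      rw [mul_one, hI1, hI2] at h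
      exact h
    intro z
    have hz : z = z.re • (1:ℂ) + z.im • Complex.I := by
      simp [Complex.real_smul, Complex.re_add_im]
    rw [hz, map_add, map_smul, map_smul, hfI]
    rw [← hz]
    ext
    · simp only [Prod.fst_add, Prod.smul_fst, smul_eq_mul, Complex.real_smul]
      conv_rhs => rw [← Complex.re_add_im z]
      ring
    · simp only [Prod.snd_add, Prod.smul_snd, smul_eq_mul, Complex.real_smul]
      have : (starRingEnd ℂ) z = z.re - z.im * Complex.I := by
        simp [Complex.ext_iff]
      rw [this]; ring
  have hab : ¬(a = 0 ∧ b = 0) := by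
    rintro ⟨h1, h2⟩
    have : f 1 = f 0 := by
      rw [map_zero]
      have : f 1 = (a, b) := by rw [ha, hb]
      rw [this, h1, h2]; rfl
    exact one_ne_zero (hfinj this)
  -- normalization
  set n : ℝ := Complex.normSq a + Complex.normSq b with hn
  have hnpos : 0 < n := by
    rcases not_and_or.mp hab with h | h
    · have := Complex.normSq_pos.mpr h
      have := Complex.normSq_nonneg b
      rw [hn]; linarith
    · have := Complex.normSq_pos.mpr h
      have := Complex.normSq_nonneg a
      rw [hn]; linarith
  set r : ℝ := Real.sqrt n with hr
  have hrpos : 0 < r := Real.sqrt_pos.mpr hnpos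
  have hrn : r * r = n := Real.mul_self_sqrt hnpos.le
  have hrC : (r : ℂ) ≠ 0 := by exact_mod_cast hrpos.ne'
  set α : ℂ := a / r with hα
  set β : ℂ := b / r with hβ
  have haα : a = (r : ℂ) * α := by rw [hα]; field_simp
  have hbβ : b = (r : ℂ) * β := by rw [hβ]; field_simp
  have hnsqr : Complex.normSq (r : ℂ) = n := by
    rw [Complex.normSq_ofReal, hrn]
  have hsum1 : Complex.normSq α + Complex.normSq β = 1 := by
    rw [hα, hβ, Complex.normSq_div, Complex.normSq_div, hnsqr]
    field_simp [hnpos.ne']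
    exact hn.symm
  -- the point on the sphere
  set y : Fin 3 → ℝ := ![Complex.normSq α - Complex.normSq β, 2 * (α * β).im,
    -2 * (α * β).re] with hy
  have hy0 : y 0 = Complex.normSq α - Complex.normSq β := rfl
  have hy1 : y 1 = 2 * (α * β).im := rfl
  have hy2 : y 2 = -2 * (α * β).re := rfl
  -- V = Vset y
  have hVy : (V : Set (ℂ × ℂ)) = Vset y := by
    ext P
    constructor
    · intro hP
      have : P ∈ LinearMap.range f := by rw [hfrange]; exact hP
      obtain ⟨z, hz⟩ := this
      rw [hf z] at hz
      refine ⟨α, β, (r : ℂ) * z, hsum1, hy0.symm, hy1.symm, hy2.symm, ?_⟩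
      rw [← hz, haα, hbβ]
      refine Prod.ext ?_ ?_
      · simp only; ring
      · simp only [map_mul, Complex.conj_ofReal]; ring
    · rintro ⟨α', β', z, hs1, hs2, hs3, hs4, rfl⟩
      rw [hy0] at hs2; rw [hy1] at hs3; rw [hy2] at hs4
      have hnα : Complex.normSq α' = Complex.normSq α := by linarith
      have hnβ : Complex.normSq β' = Complex.normSq β := by linarith
      have hprod : α' * β' = α * β := by
        apply Complex.ext
        · linarith
        · linarith
      have key : ∃ w : ℂ, α * w = α' * z ∧ β * (starRingEnd ℂ) w = β' * (starRingEnd ℂ) z := by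
        by_cases hβ0 : β = 0
        · have hβ'0 : β' = 0 := by
            rw [← Complex.normSq_eq_zero, hnβ, Complex.normSq_eq_zero]; exact hβ0
          have hα0 : α ≠ 0 := by
            intro h
            rw [h, hβ0] at hsum1; simp at hsum1
          exact ⟨α⁻¹ * α' * z, by field_simp, by rw [hβ0, hβ'0]; ring⟩
        · set lam : ℂ := (starRingEnd ℂ) (β' / β) with hlam
          have hβ'lam : β' = (starRingEnd ℂ) lam * β := by
            rw [hlam, Complex.conj_conj]
            field_simp
          have hlamnorm : lam * (starRingEnd ℂ) lam = 1 := by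
            have h1 : Complex.normSq lam = 1 := by
              rw [hlam, Complex.normSq_conj, Complex.normSq_div, hnβ]
              field_simp [Complex.normSq_eq_zero.not.mpr hβ0]
            rw [Complex.mul_conj, h1]; norm_num
          have hα'lam : α' = lam * α := by
            by_cases hα0 : α = 0
            · have : Complex.normSq α' = 0 := by rw [hnα, hα0]; simp
              rw [Complex.normSq_eq_zero] at this
              rw [this, hα0, mul_zero]
            · have hβ'0 : β' ≠ 0 := by
                intro hh
                apply hβ0
                rw [← Complex.normSq_eq_zero, ← hnβ, hh, map_zero]
              have h2 : α' * β' = lam * α * β' := by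
                rw [hprod, hβ'lam]
                calc α * β = (lam * (starRingEnd ℂ) lam) * (α * β) := by
                      rw [hlamnorm, one_mul]
                  _ = lam * α * ((starRingEnd ℂ) lam * β) := by ring
              exact mul_right_cancel₀ hβ'0 h2
          refine ⟨lam * z, ?_, ?_⟩
          · rw [hα'lam]; ring
          · rw [hβ'lam, map_mul]; ring
      obtain ⟨w, hw1, hw2⟩ := key
      have : (α' * z, β' * (starRingEnd ℂ) z) = f (w / r) := by
        rw [hf]
        refine Prod.ext ?_ ?_
        · simp only [haα, ← hw1]; field_simp
        · simp only [hbβ, ← hw2, map_div₀, Complex.conj_ofReal]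
          field_simp
      rw [this, ← hfrange]
      exact LinearMap.mem_range_self f _
  -- y is on the unit sphere
  have hynorm : y 0 * y 0 + y 1 * y 1 + y 2 * y 2 = 1 := by
    rw [hy0, hy1, hy2]
    have h1 : (α * β).re * (α * β).re + (α * β).im * (α * β).im =
        Complex.normSq α * Complex.normSq β := by
      rw [← Complex.normSq_apply, Complex.normSq_mul]
    nlinarith [hsum1, h1]
  -- orthogonality with σ' and σ''
  have hf1V : f 1 ∈ V := by rw [← hfrange]; exact LinearMap.mem_range_self f 1
  have hfIV : f Complex.I ∈ V := by rw [← hfrange]; exact LinearMap.mem_range_self f _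
  have hdot : ∀ u : Fin 3 → ℝ, (∀ x ∈ V, ∀ y ∈ V, omSigma u x y = 0) →
      u 0 * y 0 + u 1 * y 1 + u 2 * y 2 = 0 := by
    intro u hu
    have h := hu (f 1) hf1V (f Complex.I) hfIV
    rw [hf 1, hf Complex.I] at h
    simp only [mul_one] at h
    have hconjI : (starRingEnd ℂ) Complex.I = -Complex.I := Complex.conj_I
    have hom1 : om1 (a, b * (starRingEnd ℂ) 1) (a * Complex.I, b * (starRingEnd ℂ) Complex.I)
        = Complex.normSq a - Complex.normSq b := by
      simp only [om1, map_one, mul_one, hconjI]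
      simp [Complex.mul_im, Complex.mul_re, Complex.normSq_apply]
      try ring
    have homC : omC (a, b * (starRingEnd ℂ) 1) (a * Complex.I, b * (starRingEnd ℂ) Complex.I)
        = -2 * Complex.I * (a * b) := by
      simp only [omC, map_one, mul_one, hconjI]
      ring
    rw [omSigma, hom1, homC] at h
    have hre : (-2 * Complex.I * (a * b)).re = 2 * (a * b).im := by
      simp [Complex.mul_re, Complex.mul_im]; try ring
    have him : (-2 * Complex.I * (a * b)).im = -2 * (a * b).re := by
      simp [Complex.mul_re, Complex.mul_im]; try ring
    rw [hre, him] at h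
    -- relate to y
    have e1 : Complex.normSq a - Complex.normSq b = n * y 0 := by
      rw [hy0, haα, hbβ, Complex.normSq_mul, Complex.normSq_mul, hnsqr]; ring
    have e2 : (a * b).im = n * (α * β).im := by
      rw [haα, hbβ]
      have : (r:ℂ) * α * ((r:ℂ) * β) = ((n:ℝ):ℂ) * (α * β) := by
        rw [← hrn]; push_cast; ring
      rw [this, Complex.im_ofReal_mul]
    have e3 : (a * b).re = n * (α * β).re := by
      rw [haα, hbβ]
      have : (r:ℂ) * α * ((r:ℂ) * β) = ((n:ℝ):ℂ) * (α * β) := by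
        rw [← hrn]; push_cast; ring
      rw [this, Complex.re_ofReal_mul]
    rw [e1, e2, e3] at h
    have : n * (u 0 * y 0 + u 1 * y 1 + u 2 * y 2) = 0 := by
      rw [hy1, hy2]; linear_combination h
    rcases mul_eq_zero.mp this with h' | h'
    · exact absurd h' hnpos.ne'
    · exact h'
  have hdot' := hdot σ' hσ'
  have hdot'' := hdot σ'' hσ''
  -- matrix orthonormality
  have h1 : σ 0 * σ 0 + σ 1 * σ 1 + σ 2 * σ 2 = 1 := by
    have := hunit σ (by simp); rwa [Fin.sum_univ_three] at this
  have h2 : σ' 0 * σ' 0 + σ' 1 * σ' 1 + σ' 2 * σ' 2 = 1 := by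
    have := hunit σ' (by simp); rwa [Fin.sum_univ_three] at this
  have h3 : σ'' 0 * σ'' 0 + σ'' 1 * σ'' 1 + σ'' 2 * σ'' 2 = 1 := by
    have := hunit σ'' (by simp); rwa [Fin.sum_univ_three] at this
  obtain ⟨ho1, ho2, ho3⟩ := horth
  rw [Fin.sum_univ_three] at ho1 ho2 ho3
  -- columns orthonormality from M Mᵀ = 1 ⇒ Mᵀ M = 1
  have hcol := aux_col σ σ' σ'' h1 h2 h3 ho1 ho2 ho3
  obtain ⟨c, hc⟩ : ∃ c : ℝ, c = σ 0 * y 0 + σ 1 * y 1 + σ 2 * y 2 := ⟨_, rfl⟩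
  have hyc0 : y 0 = c * σ 0 := by
    have e0 := hcol 0 0
    have e1 := hcol 0 1
    have e2 := hcol 0 2
    norm_num [Fin.ext_iff] at e0 e1 e2
    linear_combination -(y 0 * e0) - y 1 * e1 - y 2 * e2 + σ' 0 * hdot' + σ'' 0 * hdot'' - σ 0 * hc
  have hyc1 : y 1 = c * σ 1 := by
    have e0 := hcol 1 0
    have e1 := hcol 1 1
    have e2 := hcol 1 2
    norm_num [Fin.ext_iff] at e0 e1 e2
    linear_combination -(y 0 * e0) - y 1 * e1 - y 2 * e2 + σ' 1 * hdot' + σ'' 1 * hdot'' - σ 1 * hc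
  have hyc2 : y 2 = c * σ 2 := by
    have e0 := hcol 2 0
    have e1 := hcol 2 1
    have e2 := hcol 2 2
    norm_num [Fin.ext_iff] at e0 e1 e2
    linear_combination -(y 0 * e0) - y 1 * e1 - y 2 * e2 + σ' 2 * hdot' + σ'' 2 * hdot'' - σ 2 * hc
  have hcc : c * c = 1 := by
    have hyn := hynorm
    rw [hyc0, hyc1, hyc2] at hyn
    linear_combination hyn - (c * c) * h1
  rcases mul_self_eq_one_iff.mp hcc with hc1 | hc1
  · left
    have h0 : y 0 = σ 0 := by rw [hyc0, hc1, one_mul]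
    have h1' : y 1 = σ 1 := by rw [hyc1, hc1, one_mul]
    have h2' : y 2 = σ 2 := by rw [hyc2, hc1, one_mul]
    rw [hVy]
    ext P
    simp only [Vset, Set.mem_setOf_eq, h0, h1', h2']
  · right
    have h0 : y 0 = -σ 0 := by rw [hyc0, hc1]; ring
    have h1' : y 1 = -σ 1 := by rw [hyc1, hc1]; ring
    have h2' : y 2 = -σ 2 := by rw [hyc2, hc1]; ring
    rw [hVy]
    ext P
    simp only [Vset, Set.mem_setOf_eq, h0, h1', h2']
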